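/- arXiv:1707.03947 — 2 statements merged into one kernel-verified Lean document; each statement's English description precedes it below -/
import Mathlib

section
/- The canonically immune Turing degrees are cofinal in the Turing degrees: for every set A ⊆ ℕ there exists a canonically immune set R with A Turing reducible to R. -/
/-- The `e`-th computably enumerable set. -/
def WSet (e : ℕ) : Set ℕ := {n | ((Denumerable.ofNat Nat.Partrec.Code e).eval n).Dom}

/-- A canonical numbering: a computable surjection onto the finite subsets of `ℕ`. -/
def CanonicalNumbering (D : ℕ → Finset ℕ) : Prop := Computable D ∧ Function.Surjective D

/-- `R` is canonically immune with modulus of immunity `h`. -/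
def CanonImmuneMod (R : Set ℕ) (h : ℕ → ℕ) : Prop :=
  R.Infinite ∧ ∀ D : ℕ → Finset ℕ, CanonicalNumbering D →
    ∀ᶠ i in Filter.atTop, ↑(D i) ⊆ R → (D i).card ≤ h i

/-- `R` is canonically immune. -/
def CanonicallyImmune (R : Set ℕ) : Prop :=
  ∃ h : ℕ → ℕ, Computable h ∧ CanonImmuneMod R h

/-- `R` is Δ⁰₂ (limit computable). -/
def Delta02 (R : Set ℕ) : Prop :=
  ∃ f : ℕ → ℕ → Bool, Computable₂ f ∧
    ∀ n, ∀ᶠ s in Filter.atTop, (f s n = true ↔ n ∈ R)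

/-- Partial functions recursive in an oracle `O : ℕ → ℕ`. -/
inductive RecursiveInOracle (O : ℕ → ℕ) : (ℕ →. ℕ) → Prop
  | zero : RecursiveInOracle O fun _ => 0
  | succ : RecursiveInOracle O fun n => Part.some (n + 1)
  | left : RecursiveInOracle O fun n => Part.some (Nat.unpair n).1
  | right : RecursiveInOracle O fun n => Part.some (Nat.unpair n).2
  | oracle : RecursiveInOracle O fun n => Part.some (O n)
  | pair {f g} : RecursiveInOracle O f → RecursiveInOracle O g →
      RecursiveInOracle O fun n => Nat.pair <$> f n <*> g n
  | comp {f g} : RecursiveInOracle O f → RecursiveInOracle O g →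
      RecursiveInOracle O fun n => g n >>= f
  | prec {f g} : RecursiveInOracle O f → RecursiveInOracle O g →
      RecursiveInOracle O (Nat.unpaired fun a n =>
        n.rec (f a) fun y IH => do let i ← IH; g (Nat.pair a (Nat.pair y i)))
  | rfind {f} : RecursiveInOracle O f →
      RecursiveInOracle O fun a => Nat.rfind fun n => (fun m => m = 0) <$> f (Nat.pair a n)

open Classical in
/-- Characteristic function of a set of naturals. -/
noncomputable def chi (A : Set ℕ) : ℕ → ℕ := fun n => if n ∈ A then 1 else 0

/-- `A` is Turing reducible to the oracle `O`. -/
def TuringReducibleTo (A : Set ℕ) (O : ℕ → ℕ) : Prop :=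
  RecursiveInOracle O fun n => Part.some (chi A n)

/-- `A` is Turing reducible to the set `B`. -/
def TuringReducibleSet (A B : Set ℕ) : Prop := TuringReducibleTo A (chi B)

/-- The oracle given by a real `G ∈ 2^ω`. -/
def oracleOf (G : ℕ → Bool) : ℕ → ℕ := fun n => cond (G n) 1 0

/-- `S` is computably enumerable relative to the real `G`. -/
def CEIn (G : ℕ → Bool) (S : Set ℕ) : Prop :=
  ∃ f : ℕ →. ℕ, RecursiveInOracle (oracleOf G) f ∧ S = {n | (f n).Dom}

/-- The length-`n` initial segment of a real. -/
def initSeg (G : ℕ → Bool) (n : ℕ) : List Bool := List.ofFn fun i : Fin n => G i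

/-- A Σ⁰₂ set of binary strings. -/
def Sigma02Strings (X : Set (List Bool)) : Prop :=
  ∃ p : List Bool → ℕ → ℕ → Bool,
    (Computable fun x : List Bool × ℕ × ℕ => p x.1 x.2.1 x.2.2) ∧
    X = {σ | ∃ m, ∀ k, p σ m k = true}

/-- A (Cohen) 2-generic real. -/
def TwoGeneric (G : ℕ → Bool) : Prop :=
  ∀ X : Set (List Bool), Sigma02Strings X →
    (∃ n, initSeg G n ∈ X) ∨ (∃ n, ∀ τ, initSeg G n <+: τ → τ ∉ X)

/-- A computably enumerable set of binary strings. -/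
def CEStrings (X : Set (List Bool)) : Prop :=
  ∃ p : List Bool → ℕ → Bool, Computable₂ p ∧ X = {σ | ∃ s, p σ s = true}

/-- A dense set of binary strings. -/
def DenseStrings (X : Set (List Bool)) : Prop := ∀ σ, ∃ τ, σ <+: τ ∧ τ ∈ X

/-- A weakly 1-generic real. -/
def Weakly1Generic (G : ℕ → Bool) : Prop :=
  ∀ X : Set (List Bool), CEStrings X → DenseStrings X → ∃ n, initSeg G n ∈ X

/-- A hyperimmune set: infinite and its increasing enumeration (principal function)
is not dominated by any computable function. -/
def Hyperimmune (R : Set ℕ) : Prop :=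
  R.Infinite ∧ ∀ f : ℕ → ℕ, Computable f →
    ∃ᶠ n in Filter.atTop, f n < Nat.nth (· ∈ R) n

/-- A (computable) Mathias condition `[a, A]`. -/
structure MathiasCond where
  a : Finset ℕ
  A : Set ℕ
  infinite : A.Infinite
  comp : ComputablePred (· ∈ A)
  lt : ∀ x ∈ a, ∀ y ∈ A, x < y

/-- `c'` extends `c` as a Mathias condition. -/
def MathiasCond.Extends (c' c : MathiasCond) : Prop :=
  c.a ⊆ c'.a ∧ (↑c'.a \ ↑c.a : Set ℕ) ⊆ c.A ∧ c'.A ⊆ c.A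

/-- A dense family of Mathias conditions. -/
def MathiasDense (𝒳 : Set MathiasCond) : Prop := ∀ c, ∃ c' ∈ 𝒳, c'.Extends c

/-- `R ∈ [a, A]`. -/
def MathiasCond.Mem (c : MathiasCond) (R : Set ℕ) : Prop :=
  ↑c.a ⊆ R ∧ R ⊆ ↑c.a ∪ c.A

/-- `R` meets the family `𝒳` of Mathias conditions. -/
def Meets (R : Set ℕ) (𝒳 : Set MathiasCond) : Prop := ∃ c ∈ 𝒳, c.Mem R

/-- The arithmetical sets of naturals: closure of the computable sets under
complementation and projection. -/
inductive Arithmetical : Set ℕ → Prop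
  | of_computable {S : Set ℕ} : ComputablePred (· ∈ S) → Arithmetical S
  | compl {S : Set ℕ} : Arithmetical S → Arithmetical {n | n ∉ S}
  | proj {S : Set ℕ} : Arithmetical S → Arithmetical {n | ∃ m, Nat.pair n m ∈ S}

open Classical in
/-- `n` codes the Mathias condition `c`: its first component is the canonical code of the
finite set and its second component is an index for the characteristic function of `A`. -/
noncomputable def CondCode (n : ℕ) (c : MathiasCond) : Prop :=
  n.unpair.1 = Encodable.encode c.a ∧
  ∀ x, ((Denumerable.ofNat Nat.Partrec.Code n.unpair.2)).eval x = Part.some (if x ∈ c.A then 1 else 0)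

/-- The set of codes of members of `𝒳`. -/
def CodesOf (𝒳 : Set MathiasCond) : Set ℕ := {n | ∃ c ∈ 𝒳, CondCode n c}

/-- A Mathias generic real: one meeting every arithmetically definable dense family
of Mathias conditions. -/
def MathiasGeneric (R : Set ℕ) : Prop :=
  ∀ 𝒳 : Set MathiasCond, Arithmetical (CodesOf 𝒳) → MathiasDense 𝒳 → Meets R 𝒳

/-- A Σ⁰₃ set of naturals. -/
def Sigma03Set (S : Set ℕ) : Prop :=
  ∃ p : ℕ → ℕ → ℕ → ℕ → Bool,
    (Computable fun x : ℕ × ℕ × ℕ × ℕ => p x.1 x.2.1 x.2.2.1 x.2.2.2) ∧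
    S = {n | ∃ a, ∀ b, ∃ c, p n a b c = true}

/-- A Mathias 3-generic real. -/
def Mathias3Generic (R : Set ℕ) : Prop :=
  ∀ 𝒳 : Set MathiasCond, Sigma03Set (CodesOf 𝒳) → MathiasDense 𝒳 → Meets R 𝒳

/-- An effectively immune set. -/
def EffectivelyImmune (Q : Set ℕ) : Prop :=
  Q.Infinite ∧ ∃ h : ℕ → ℕ, Computable h ∧
    ∀ e, WSet e ⊆ Q → (WSet e).Finite ∧ (WSet e).ncard ≤ h e

/-- The basic cylinder of 2^ω determined by the finite string `σ`. -/
def Cyl (σ : List Bool) : Set (ℕ → Bool) := {G | ∀ i : Fin σ.length, G i = σ.get i}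

/-- The open subset of 2^ω generated by a set of strings. -/
def OpenFrom (P : Set (List Bool)) : Set (ℕ → Bool) := ⋃ σ ∈ P, Cyl σ

/-- A uniformly c.e. sequence of sets of strings. -/
def UniformlyCE (P : ℕ → Set (List Bool)) : Prop :=
  ∃ f : ℕ → List Bool → ℕ → Bool,
    (Computable fun x : ℕ × List Bool × ℕ => f x.1 x.2.1 x.2.2) ∧
    ∀ n σ, σ ∈ P n ↔ ∃ s, f n σ s = true

/-- `μ` is the uniform (fair-coin) product measure on 2^ω: every basic cylinder
determined by a string of length `l` has measure `2⁻ˡ`. -/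
def IsFairCoin (μ : MeasureTheory.Measure (ℕ → Bool)) : Prop :=
  ∀ σ : List Bool, μ (Cyl σ) = (2 ^ σ.length : ENNReal)⁻¹

/-- A Schnorr test with respect to the measure `μ`: uniformly c.e. open sets with
uniformly computable measures bounded by `2^{-n}`. -/
def SchnorrTest (μ : MeasureTheory.Measure (ℕ → Bool)) (U : ℕ → Set (ℕ → Bool)) : Prop :=
  (∃ P : ℕ → Set (List Bool), UniformlyCE P ∧ ∀ n, U n = OpenFrom (P n)) ∧
  (∃ q : ℕ → ℕ → ℚ, Computable₂ q ∧
    ∀ n k, |(q n k : ℝ) - (μ (U n)).toReal| ≤ (2 : ℝ)⁻¹ ^ k) ∧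
  ∀ n, μ (U n) ≤ (2 ^ n : ENNReal)⁻¹

/-- A Schnorr random real (with respect to the fair-coin measure `μ`). -/
def SchnorrRandom (μ : MeasureTheory.Measure (ℕ → Bool)) (G : ℕ → Bool) : Prop :=
  ∀ U : ℕ → Set (ℕ → Bool), SchnorrTest μ U → G ∉ ⋂ n, U n

open Classical in
/-- The characteristic sequence of a set of naturals, as a point of 2^ω. -/
noncomputable def chiB (R : Set ℕ) : ℕ → Bool := fun n => decide (n ∈ R)


/-! ### Auxiliary lemmas -/

section Aux

open Encodable Denumerable

lemma aux_add_le_pair (a b : ℕ) : a + b ≤ Nat.pair a b := by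
  unfold Nat.pair
  split_ifs with h
  · nlinarith [Nat.le_mul_of_pos_left b (show 0 < b by omega)]
  · nlinarith

lemma aux_sum_length_le_encode : ∀ l : List ℕ, l.sum + l.length ≤ Encodable.encode l
  | [] => by simp
  | a :: l => by
    have ih := aux_sum_length_le_encode l
    have h2 := aux_add_le_pair a (Encodable.encode l)
    simp only [Encodable.encode_list_cons, List.sum_cons, List.length_cons,
      Encodable.encode_nat] at *
    omega

lemma aux_mem_raise'_le : ∀ (l : List ℕ) (n : ℕ), ∀ x ∈ Denumerable.raise' l n,
    x ≤ n + l.sum + l.length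
  | [], _, x, hx => by simp [Denumerable.raise'] at hx
  | m :: l, n, x, hx => by
    simp only [Denumerable.raise', List.mem_cons] at hx
    rcases hx with rfl | hx
    · simp; omega
    · have := aux_mem_raise'_le l (m + n + 1) x hx
      simp only [List.sum_cons, List.length_cons]
      omega

lemma aux_mem_le_encodeF (F : Finset ℕ) (x : ℕ) (hx : x ∈ F) :
    x ≤ @Encodable.encode (Finset ℕ)
      (@Primcodable.toEncodable _ (Primcodable.ofDenumerable _)) F := by
  set l : List ℕ := (F.map (Denumerable.eqv ℕ).toEmbedding).sort (· ≤ ·) with hl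
  have hxl : x ∈ l := by
    rw [hl, Finset.mem_sort]
    exact Finset.mem_map_of_mem _ hx
  have hsort : List.SortedLT l := Finset.sortedLT_sort _
  have hr : Denumerable.raise' (Denumerable.lower' l 0) 0 = l :=
    Denumerable.raise_lower' (fun m _ => Nat.zero_le m) hsort
  have hx' : x ∈ Denumerable.raise' (Denumerable.lower' l 0) 0 := by rw [hr]; exact hxl
  have h1 := aux_mem_raise'_le _ _ _ hx'
  have h2 := aux_sum_length_le_encode (Denumerable.lower' l 0)
  have h3 : @Encodable.encode (Finset ℕ)
      (@Primcodable.toEncodable _ (Primcodable.ofDenumerable _)) F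
      = Encodable.encode (Denumerable.lower' l 0) := rfl
  omega

open Classical in
/-- Value (or `0`) of the `e`-th partial computable function at `n`. -/
noncomputable def auxPhi (e n : ℕ) : ℕ :=
  if h : ((Denumerable.ofNat Nat.Partrec.Code e).eval n).Dom
  then ((Denumerable.ofNat Nat.Partrec.Code e).eval n).get h else 0

/-- A sum dominating initial segments of all partial computable functions. -/
noncomputable def auxBsum (n : ℕ) : ℕ :=
  ∑ e ∈ Finset.range (n + 1), ∑ m ∈ Finset.range (n + 1), auxPhi e m

/-- A fast-growing function dominating every computable function. -/
noncomputable def auxB (n : ℕ) : ℕ := 2 * (n + 1 + auxBsum n)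

lemma auxBsum_mono : Monotone auxBsum := by
  apply monotone_nat_of_le_succ
  intro n
  calc auxBsum n ≤ ∑ e ∈ Finset.range (n + 1), ∑ m ∈ Finset.range (n + 1 + 1), auxPhi e m := by
        apply Finset.sum_le_sum
        intro e _
        exact Finset.sum_le_sum_of_subset (Finset.range_subset_range.2 (by omega))
    _ ≤ auxBsum (n + 1) :=
        Finset.sum_le_sum_of_subset (Finset.range_subset_range.2 (by omega))

lemma auxB_step (n : ℕ) : auxB n + 2 ≤ auxB (n + 1) := by
  have h : auxBsum n ≤ auxBsum (n + 1) := auxBsum_mono (by omega)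
  unfold auxB
  omega

lemma aux_natPartrec_of_computable {f : ℕ → ℕ} (h : Computable f) :
    Nat.Partrec (fun n => Part.some (f n)) :=
  (Partrec.nat_iff.1 h).of_eq fun _ => rfl

lemma auxB_dominates (g : ℕ → ℕ) (hg : Computable g) : ∃ N, ∀ n ≥ N, g n < auxB n := by
  obtain ⟨c, hc⟩ := Nat.Partrec.Code.exists_code.1 (aux_natPartrec_of_computable hg)
  refine ⟨Encodable.encode c, fun n hn => ?_⟩
  have hphi : auxPhi (Encodable.encode c) n = g n := by
    unfold auxPhi
    rw [Denumerable.ofNat_encode, hc]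
    simp
  have h1 : auxPhi (Encodable.encode c) n ≤ auxBsum n := by
    unfold auxBsum
    calc auxPhi (Encodable.encode c) n
        ≤ ∑ m ∈ Finset.range (n + 1), auxPhi (Encodable.encode c) m :=
          Finset.single_le_sum (fun _ _ => Nat.zero_le _) (Finset.mem_range.2 (by omega))
      _ ≤ _ := Finset.single_le_sum (f := fun e => ∑ m ∈ Finset.range (n + 1), auxPhi e m)
          (fun _ _ => Nat.zero_le _) (Finset.mem_range.2 (by omega))
  unfold auxB
  omega

theorem RecursiveInOracle.of_partrec {O : ℕ → ℕ} {f : ℕ →. ℕ} (h : Nat.Partrec f) :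
    RecursiveInOracle O f := by
  induction h with
  | zero => exact .zero
  | succ => exact .succ
  | left => exact .left
  | right => exact .right
  | pair _ _ ihf ihg => exact .pair ihf ihg
  | comp _ _ ihf ihg => exact .comp ihf ihg
  | prec _ _ ihf ihg => exact .prec ihf ihg
  | rfind _ ihf => exact .rfind ihf

theorem RecursiveInOracle.of_eq {O : ℕ → ℕ} {f g : ℕ →. ℕ} (h : RecursiveInOracle O f)
    (H : ∀ n, f n = g n) : RecursiveInOracle O g := (funext H : f = g) ▸ h

end Aux

/-- The canonically immune degrees are cofinal in the Turing degrees. -/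
theorem canonically_immune_cofinal :
    ∀ A : Set ℕ, ∃ R : Set ℕ, CanonicallyImmune R ∧ TuringReducibleSet A R := by
  intro A
  classical
  set r : ℕ → ℕ := fun n => auxB n + chi A n with hr_def
  have hchi_le : ∀ n, chi A n ≤ 1 := fun n => by unfold chi; split <;> omega
  have hr_mono : StrictMono r := strictMono_nat_of_lt_succ (fun n => by
    have h1 := auxB_step n
    have h2 := hchi_le n
    have h3 := hchi_le (n + 1)
    simp only [hr_def]
    omega)
  have hRinf : (Set.range r).Infinite := Set.infinite_range_of_injective hr_mono.injective
  have hBr : ∀ n, auxB n ≤ r n := fun n => by simp [hr_def]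
  refine ⟨Set.range r, ⟨fun i => i, Computable.id, hRinf, ?_⟩, ?_⟩
  · -- canonical immunity with modulus `id`
    intro D hD
    have hg : Computable (fun i => @Encodable.encode (Finset ℕ)
        (@Primcodable.toEncodable _ (Primcodable.ofDenumerable _)) (D i)) :=
      Computable.encode.comp hD.1
    obtain ⟨N, hN⟩ := auxB_dominates _ hg
    rw [Filter.eventually_atTop]
    refine ⟨N, fun i hi hsub => ?_⟩
    by_contra hcard
    push_neg at hcard
    have hex : ∃ m, r m ∈ D i ∧ i ≤ m := by
      by_contra hno
      push_neg at hno
      have hsub2 : D i ⊆ (Finset.range i).image r := by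
        intro x hx
        obtain ⟨m, rfl⟩ := hsub hx
        exact Finset.mem_image.2 ⟨m, Finset.mem_range.2 (hno m hx), rfl⟩
      have hc1 := Finset.card_le_card hsub2
      have hc2 := Finset.card_image_le (s := Finset.range i) (f := r)
      rw [Finset.card_range] at hc2
      omega
    obtain ⟨m, hm, him⟩ := hex
    have h1 : r i ≤ r m := hr_mono.monotone him
    have h2 := aux_mem_le_encodeF _ _ hm
    have h3 := hN i hi
    have h4 := hBr i
    omega
  · -- Turing reduction
    set O := chi (Set.range r) with hO
    have hO1 : ∀ x, (1 - O x = 0) ↔ x ∈ Set.range r := fun x => by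
      by_cases hx : x ∈ Set.range r <;> simp [hO, chi, hx]
    set nextR : ℕ → ℕ := fun i => sInf {x | i < x ∧ x ∈ Set.range r} with hnx
    have hne : ∀ i, {x | i < x ∧ x ∈ Set.range r}.Nonempty := fun i => by
      obtain ⟨b, hb, hib⟩ := hRinf.exists_gt i
      exact ⟨b, hib, hb⟩
    have hmem : ∀ i, i < nextR i ∧ nextR i ∈ Set.range r := fun i => Nat.sInf_mem (hne i)
    have hleast : ∀ i x, i < x → x ∈ Set.range r → nextR i ≤ x :=
      fun i x h1 h2 => Nat.sInf_le ⟨h1, h2⟩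
    set k : ℕ → ℕ := fun i => nextR i - (i + 1) with hk
    have hik : ∀ i, i + 1 + k i = nextR i := fun i => by
      have := (hmem i).1
      simp only [hk]
      omega
    have hnextR_r : ∀ y, nextR (r y) = r (y + 1) := by
      intro y
      refine le_antisymm (hleast _ _ (hr_mono (by omega)) ⟨y + 1, rfl⟩) ?_
      obtain ⟨hlt, m, hmeq⟩ := hmem (r y)
      rw [← hmeq]
      rw [← hmeq] at hlt
      have hym : y < m := hr_mono.lt_iff_lt.1 hlt
      exact hr_mono.monotone (by omega)
    -- computable ingredients
    have h_sub1 : Nat.Partrec (fun t : ℕ => Part.some (1 - t)) :=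
      aux_natPartrec_of_computable
        ((Primrec.nat_sub.comp (Primrec.const 1) Primrec.id).to_comp)
    have h_add : Nat.Partrec (fun m : ℕ => Part.some (m.unpair.1 + 1 + m.unpair.2)) :=
      aux_natPartrec_of_computable
        ((Primrec.nat_add.comp
          (Primrec.nat_add.comp (Primrec.fst.comp Primrec.unpair) (Primrec.const 1))
          (Primrec.snd.comp Primrec.unpair)).to_comp)
    have h_proj : Nat.Partrec (fun z : ℕ => Part.some z.unpair.2.unpair.2) :=
      aux_natPartrec_of_computable
        ((Primrec.snd.comp (Primrec.unpair.comp (Primrec.snd.comp Primrec.unpair))).to_comp)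
    have h_pair0 : Nat.Partrec (fun n : ℕ => Part.some (Nat.pair 0 n)) :=
      aux_natPartrec_of_computable
        ((Primrec₂.natPair.comp (Primrec.const 0) Primrec.id).to_comp)
    have h_mod : Nat.Partrec (fun z : ℕ => Part.some (z % 2)) :=
      aux_natPartrec_of_computable
        ((Primrec.nat_mod.comp Primrec.id (Primrec.const 2)).to_comp)
    -- the oracle chain
    have hOr : RecursiveInOracle O (fun n : ℕ => Part.some (1 - O n)) :=
      (RecursiveInOracle.comp (.of_partrec h_sub1) .oracle).of_eq fun n => by
        simp [Part.bind_some]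
    have hq : RecursiveInOracle O (fun m : ℕ => Part.some (1 - O (m.unpair.1 + 1 + m.unpair.2))) :=
      (RecursiveInOracle.comp hOr (.of_partrec h_add)).of_eq fun m => by
        simp [Part.bind_some]
    have hrf : RecursiveInOracle O (fun i : ℕ => Part.some (k i)) := by
      refine (RecursiveInOracle.rfind hq).of_eq fun i => ?_
      rw [Part.eq_some_iff]
      refine Nat.mem_rfind.2 ⟨?_, ?_⟩
      · have hmemR : i + 1 + k i ∈ Set.range r := by rw [hik]; exact (hmem i).2
        simp only [Nat.unpair_pair, Part.map_some, Part.mem_some_iff]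
        simp [(hO1 _).2 hmemR]
      · intro m hm
        have hnot : i + 1 + m ∉ Set.range r := by
          intro hmm
          have := hleast i (i + 1 + m) (by omega) hmm
          have := hik i
          omega
        simp only [Nat.unpair_pair, Part.map_some, Part.mem_some_iff]
        have : 1 - O (i + 1 + m) ≠ 0 := fun hh => hnot ((hO1 _).1 hh)
        simp [this]
    have hid : RecursiveInOracle O (fun n : ℕ => Part.some n) :=
      .of_partrec (aux_natPartrec_of_computable Computable.id)
    have hpairk : RecursiveInOracle O (fun n : ℕ => Part.some (Nat.pair n (k n))) :=
      (RecursiveInOracle.pair hid hrf).of_eq fun n => by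
        simp [Seq.seq]
    have hnxt : RecursiveInOracle O (fun i : ℕ => Part.some (nextR i)) :=
      (RecursiveInOracle.comp (.of_partrec h_add) hpairk).of_eq fun i => by
        simp [Part.bind_some, Nat.unpair_pair, hik]
    have hstep : RecursiveInOracle O (fun z : ℕ => Part.some (nextR z.unpair.2.unpair.2)) :=
      (RecursiveInOracle.comp hnxt (.of_partrec h_proj)).of_eq fun z => by
        simp [Part.bind_some]
    have hbase : RecursiveInOracle O (fun _ : ℕ => Part.some (r 0)) :=
      .of_partrec (aux_natPartrec_of_computable (Computable.const (r 0)))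
    have hG : RecursiveInOracle O (fun x : ℕ => Part.some (r x.unpair.2)) := by
      refine (RecursiveInOracle.prec hbase hstep).of_eq fun x => ?_
      simp only [Nat.unpaired]
      generalize x.unpair.1 = a
      generalize x.unpair.2 = n
      induction n with
      | zero => rfl
      | succ y ih =>
        simp only [Nat.rec_add_one] at *
        rw [ih]
        simp [Part.bind_some, Nat.unpair_pair, hnextR_r]
    have hGn : RecursiveInOracle O (fun n : ℕ => Part.some (r n)) :=
      (RecursiveInOracle.comp hG (.of_partrec h_pair0)).of_eq fun n => by
        simp [Part.bind_some, Nat.unpair_pair]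
    have hfinal : RecursiveInOracle O (fun n : ℕ => Part.some (chi A n)) := by
      refine (RecursiveInOracle.comp (.of_partrec h_mod) hGn).of_eq fun n => ?_
      have h1 : r n = 2 * (n + 1 + auxBsum n) + chi A n := rfl
      have h2 := hchi_le n
      simp only [Part.bind_eq_bind, Part.bind_some, Part.some_inj]
      omega
    exact hfinal
end

section
/- No weakly 1-generic real is canonically immune. -/
section Aux
open Denumerable Encodable

lemma ofNat_finset_eq (n : ℕ) : Denumerable.ofNat (Finset ℕ) n =
    Finset.map (Denumerable.eqv ℕ).symm.toEmbedding
      (Denumerable.raise'Finset (Denumerable.ofNat (List ℕ) n) 0) :=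
  Denumerable.ofNat_of_decode rfl

lemma eqv_nat_symm_emb : (Denumerable.eqv ℕ).symm.toEmbedding = Function.Embedding.refl ℕ := by
  ext x; simp [Denumerable.eqv, Denumerable.ofNat_nat]

lemma ofNat_finset_encode (l : List ℕ) :
    Denumerable.ofNat (Finset ℕ) (Encodable.encode l) = Denumerable.raise'Finset l 0 := by
  rw [ofNat_finset_eq, Denumerable.ofNat_encode, eqv_nat_symm_emb, Finset.map_refl]

lemma raise'_length : ∀ (l : List ℕ) (n), (Denumerable.raise' l n).length = l.length
  | [], _ => rfl
  | m :: l, n => by simp [Denumerable.raise', raise'_length]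

lemma raise'Finset_card (l : List ℕ) (n : ℕ) :
    (Denumerable.raise'Finset l n).card = l.length := by
  simp [Denumerable.raise'Finset, Finset.card, raise'_length]

lemma mem_raise'_replicate : ∀ (c j x : ℕ),
    x ∈ Denumerable.raise' (List.replicate c 0) j ↔ j ≤ x ∧ x < j + c
  | 0, j, x => by simp [Denumerable.raise']
  | c + 1, j, x => by
    simp [List.replicate_succ, Denumerable.raise', mem_raise'_replicate c (j + 1) x]
    omega

lemma mem_raise'Finset_cons (k c x : ℕ) :
    x ∈ Denumerable.raise'Finset (k :: List.replicate c 0) 0 ↔ k ≤ x ∧ x ≤ k + c := by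
  show x ∈ Denumerable.raise' (k :: List.replicate c 0) 0 ↔ _
  simp [Denumerable.raise', mem_raise'_replicate]
  omega

lemma primrec_replicate {α : Type*} [Primcodable α] (a : α) :
    Primrec (fun m => List.replicate m a) := by
  have : Primrec (Nat.rec ([] : List α) (fun _ ih => a :: ih)) :=
    Primrec.nat_rec₁ _ ((Primrec.list_cons.comp (Primrec.const a) Primrec.snd).to₂)
  exact this.of_eq fun m => by induction m with
    | zero => rfl
    | succ m ih => simp [List.replicate_succ, ih]

variable (h : ℕ → ℕ)

/-- The tailored canonical numbering. -/
noncomputable def myD : ℕ → Finset ℕ := fun i =>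
  Denumerable.ofNat (Finset ℕ)
    (if i % 2 = 0 then Encodable.encode ((i / 2) :: List.replicate (h i) 0 : List ℕ) else i / 2)

lemma myD_computable (hh : Computable h) : Computable (myD h) := by
  have hdiv : Computable (fun i : ℕ => i / 2) :=
    (Primrec.nat_div.comp .id (Primrec.const 2)).to_comp
  have hc : Computable (fun i : ℕ => decide (i % 2 = 0)) :=
    (Primrec.eq.comp (Primrec.nat_mod.comp .id (Primrec.const 2)) (Primrec.const 0)).decide.to_comp
  have hlist : Computable (fun i : ℕ => ((i / 2) :: List.replicate (h i) 0 : List ℕ)) :=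
    Computable.list_cons.comp hdiv (((primrec_replicate (0:ℕ)).to_comp).comp hh)
  have henc : Computable (fun i : ℕ =>
      Encodable.encode ((i / 2) :: List.replicate (h i) 0 : List ℕ)) :=
    Computable.encode.comp hlist
  refine (Computable.ofNat (Finset ℕ)).comp ((Computable.cond hc henc hdiv).of_eq fun i => ?_)
  by_cases hi : i % 2 = 0 <;> simp [hi]

lemma myD_surjective : Function.Surjective (myD h) := by
  intro s
  obtain ⟨m, rfl⟩ := (Denumerable.eqv (Finset ℕ)).symm.surjective s
  refine ⟨2 * m + 1, ?_⟩
  have h1 : (2 * m + 1) % 2 = 1 := by omega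
  have h2 : (2 * m + 1) / 2 = m := by omega
  simp [myD, h1, h2]
  rfl

lemma myD_even (k : ℕ) :
    myD h (2 * k) = Denumerable.raise'Finset (k :: List.replicate (h (2 * k)) 0) 0 := by
  have h1 : (2 * k) % 2 = 0 := by omega
  have h2 : (2 * k) / 2 = k := by omega
  simp only [myD, h2]
  rw [if_pos h1, ofNat_finset_encode]

/-- `allOnes σ k c = true` iff positions `k, …, k+c-1` of `σ` (with default `false`) are `true`. -/
def allOnes (σ : List Bool) (k : ℕ) : ℕ → Bool
  | 0 => true
  | c + 1 => allOnes σ k c && σ.getD (k + c) false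

lemma allOnes_iff (σ : List Bool) (k : ℕ) :
    ∀ c, allOnes σ k c = true ↔ ∀ j < c, σ.getD (k + j) false = true
  | 0 => by simp [allOnes]
  | c + 1 => by
    simp only [allOnes, Bool.and_eq_true, allOnes_iff σ k c]
    constructor
    · rintro ⟨h1, h2⟩ j hj
      rcases Nat.lt_succ_iff_lt_or_eq.1 hj with hj' | rfl
      · exact h1 j hj'
      · exact h2
    · exact fun H => ⟨fun j hj => H j (Nat.lt_succ_of_lt hj), H c (Nat.lt_succ_self c)⟩

/-- The test function for the dense c.e. set of strings. -/
def pfun (n : ℕ) (σ : List Bool) (k : ℕ) : Bool :=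
  (decide (n ≤ k) && decide (σ.length = k + h (2 * k) + 1)) && allOnes σ k (h (2 * k) + 1)

lemma pfun_computable (hh : Computable h) (n : ℕ) : Computable₂ (pfun h n) := by
  have hk : Computable fun x : List Bool × ℕ => x.2 := Computable.snd
  have hσ : Computable fun x : List Bool × ℕ => x.1 := Computable.fst
  have hm : Computable fun x : List Bool × ℕ => h (2 * x.2) + 1 :=
    (Primrec.succ.to_comp).comp
      (hh.comp ((Primrec.nat_mul.comp (Primrec.const 2) Primrec.snd).to_comp))
  have hc1 : Computable fun x : List Bool × ℕ => decide (n ≤ x.2) :=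
    (Primrec.nat_le.comp (Primrec.const n) Primrec.snd).decide.to_comp
  have hc2 : Computable fun x : List Bool × ℕ => decide (x.1.length = x.2 + h (2 * x.2) + 1) :=
    (Primrec.eq.decide.to_comp).comp
      ((Primrec.list_length.comp Primrec.fst).to_comp)
      ((Primrec.succ.to_comp).comp
        ((Primrec.nat_add.to_comp).comp hk
          (hh.comp ((Primrec.nat_mul.comp (Primrec.const 2) Primrec.snd).to_comp))))
  have hstep : Computable₂ fun (x : List Bool × ℕ) (y : ℕ × Bool) =>
      y.2 && x.1.getD (x.2 + y.1) false := by
    have hgetD : Computable₂ fun (l : List Bool) (i : ℕ) => l.getD i false :=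
      (Primrec.list_getD false).to_comp
    exact ((Primrec₂.to_comp (Primrec.dom_bool₂ (· && ·))).comp
      (Computable.snd.comp Computable.snd)
      (hgetD.comp (Computable.fst.comp Computable.fst)
        ((Primrec.nat_add.to_comp).comp (Computable.snd.comp Computable.fst)
          (Computable.fst.comp Computable.snd)))).to₂
  have hall : Computable fun x : List Bool × ℕ => allOnes x.1 x.2 (h (2 * x.2) + 1) := by
    have := Computable.nat_rec hm (Computable.const true) hstep
    refine this.of_eq fun x => ?_
    generalize h (2 * x.2) + 1 = c
    induction c with
    | zero => rfl
    | succ c ih => simpa [allOnes] using congrArg (· && x.1.getD (x.2 + c) false) ih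
  have hband : Computable₂ fun a b : Bool => a && b := Primrec₂.to_comp (Primrec.dom_bool₂ _)
  exact (hband.comp (hband.comp hc1 hc2) hall).to₂

lemma initSeg_getD (G : ℕ → Bool) (t i : ℕ) (hi : i < t) :
    (initSeg G t).getD i false = G i := by
  have hlen : i < (initSeg G t).length := by simpa [initSeg] using hi
  rw [List.getD_eq_getElem _ _ hlen]
  simp [initSeg]

lemma pfun_dense (n : ℕ) : DenseStrings {σ | ∃ k, pfun h n σ k = true} := by
  intro σ
  set k := max n σ.length with hk
  set τ := (σ ++ List.replicate (k - σ.length) false) ++ List.replicate (h (2 * k) + 1) true with hτ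
  refine ⟨τ, ⟨_, by rw [hτ, List.append_assoc]⟩, k, ?_⟩
  have hlen1 : (σ ++ List.replicate (k - σ.length) false).length = k := by
    simp [Nat.add_sub_cancel' (le_max_right n σ.length)]
    omega
  have hlenτ : τ.length = k + h (2 * k) + 1 := by
    rw [hτ, List.length_append, hlen1]
    simp; omega
  have hallτ : allOnes τ k (h (2 * k) + 1) = true := by
    rw [allOnes_iff]
    intro j hj
    rw [hτ, List.getD_append_right _ _ _ _ (by rw [hlen1]; omega), hlen1]
    have : k + j - k = j := by omega
    rw [this, List.getD_eq_getElem _ _ (by simpa using hj)]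
    simp
  have hnk : n ≤ k := le_max_left _ _
  simp [pfun, hlenτ, hallτ, hnk]

end Aux

/-- No weakly 1-generic real is canonically immune. -/
theorem weakly1generic_not_canonically_immune :
    ∀ G : ℕ → Bool, Weakly1Generic G → ¬ CanonicallyImmune {n | G n = true} := by
  rintro G hG ⟨h, hcomp, hinf, hmod⟩
  obtain ⟨N, hN⟩ := Filter.eventually_atTop.1
    (hmod (myD h) ⟨myD_computable h hcomp, myD_surjective h⟩)
  obtain ⟨t, k, hpk⟩ := hG {σ | ∃ k, pfun h N σ k = true}
    ⟨pfun h N, pfun_computable h hcomp N, rfl⟩ (pfun_dense h N)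
  rw [pfun, Bool.and_eq_true, Bool.and_eq_true] at hpk
  obtain ⟨⟨hn, hlen⟩, hall⟩ := hpk
  rw [decide_eq_true_iff] at hn
  rw [decide_eq_true_iff] at hlen
  have hlt : (initSeg G t).length = t := by simp [initSeg]
  have ht : t = k + h (2 * k) + 1 := by rw [← hlt, hlen]
  have hG1 : ∀ x, k ≤ x → x ≤ k + h (2 * k) → G x = true := by
    intro x hx1 hx2
    have hj := (allOnes_iff (initSeg G t) k (h (2 * k) + 1)).1 hall (x - k) (by omega)
    rw [show k + (x - k) = x from by omega] at hj
    rwa [initSeg_getD G t x (by omega)] at hj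
  have hsub : ↑(myD h (2 * k)) ⊆ {n | G n = true} := by
    intro x hx
    rw [Finset.mem_coe, myD_even, mem_raise'Finset_cons] at hx
    exact hG1 x hx.1 hx.2
  have hcard := hN (2 * k) (by omega) hsub
  rw [myD_even, raise'Finset_card] at hcard
  simp at hcard
end
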